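/- For any positive integer k and complex number z with |z| ≤ 1 and Re(z) ≤ 0, the truncated Taylor series T_k(z) = ∑_{j=0}^k z^j/j! satisfies |T_k(z) - exp(z)| ≤ 1/(k+1)!. -/

import Mathlib

open intervalIntegral MeasureTheory

private lemma cpow_cont (m : ℕ) : Continuous fun t : ℝ => ((1 : ℂ) - t) ^ m :=
  (continuous_const.sub Complex.continuous_ofReal).pow m

private lemma cexp_cont (z : ℂ) : Continuous fun t : ℝ => Complex.exp (t * z) :=
  Complex.continuous_exp.comp (Complex.continuous_ofReal.mul continuous_const)

private lemma expd (z : ℂ) (t : ℝ) :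
    HasDerivAt (fun s : ℝ => Complex.exp (s * z)) (z * Complex.exp (t * z)) t := by
  have h1 : HasDerivAt (fun s : ℝ => (s : ℂ) * z) z t := by
    simpa using (Complex.ofRealCLM.hasDerivAt (x := t)).mul_const z
  simpa [mul_comm, Function.comp_def] using (Complex.hasDerivAt_exp ((t : ℂ) * z)).comp t h1

private lemma powd (k : ℕ) (t : ℝ) :
    HasDerivAt (fun s : ℝ => ((1 : ℂ) - s) ^ (k + 1))
      (-((k + 1 : ℂ) * ((1 : ℂ) - t) ^ k)) t := by
  have h1 : HasDerivAt (fun s : ℝ => (1 : ℂ) - s) (-1) t := by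
    simpa using ((Complex.ofRealCLM.hasDerivAt (x := t)).const_sub (1 : ℂ))
  have h2 := (hasDerivAt_pow (k + 1) ((1 : ℂ) - (t : ℝ))).comp t h1
  refine h2.congr_deriv ?_
  rw [Nat.add_sub_cancel]; push_cast
  ring

private lemma remainder_formula (z : ℂ) (k : ℕ) :
    Complex.exp z - ∑ j ∈ Finset.range (k + 1), z ^ j / (Nat.factorial j : ℂ)
      = z ^ (k + 1) / (Nat.factorial k : ℂ) *
        ∫ t in (0:ℝ)..1, ((1 : ℂ) - t) ^ k * Complex.exp (t * z) := by
  induction k with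
  | zero =>
    have h : ∫ t in (0:ℝ)..1, z * Complex.exp (t * z) = Complex.exp z - 1 := by
      have := integral_eq_sub_of_hasDerivAt (a := (0:ℝ)) (b := 1)
        (f := fun s : ℝ => Complex.exp (s * z)) (f' := fun t => z * Complex.exp (t * z))
        (fun t _ => expd z t)
        ((continuous_const.mul (cexp_cont z)).intervalIntegrable 0 1)
      simpa using this
    have h2 : ∫ t in (0:ℝ)..1, ((1 : ℂ) - t) ^ 0 * Complex.exp (t * z)
        = ∫ t in (0:ℝ)..1, Complex.exp (t * z) := by simp
    rw [h2]
    rcases eq_or_ne z 0 with rfl | hz0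
    · simp
    · rw [show ∫ t in (0:ℝ)..1, Complex.exp (t * z)
          = (∫ t in (0:ℝ)..1, z * Complex.exp (t * z)) / z by
        rw [intervalIntegral.integral_const_mul]; field_simp; congr 1; ext t; ring]
      rw [h]
      simp [Nat.factorial]
      field_simp
  | succ k ih =>
    have ibp := intervalIntegral.integral_deriv_mul_eq_sub (a := (0:ℝ)) (b := 1)
      (u := fun s : ℝ => ((1 : ℂ) - s) ^ (k + 1))
      (u' := fun t => -((k + 1 : ℂ) * ((1 : ℂ) - t) ^ k))
      (v := fun s : ℝ => Complex.exp (s * z))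
      (v' := fun t => z * Complex.exp (t * z))
      (fun t _ => powd k t) (fun t _ => expd z t)
      (((continuous_const.mul (cpow_cont k)).neg).intervalIntegrable 0 1)
      ((continuous_const.mul (cexp_cont z)).intervalIntegrable 0 1)
    have hsplit : (∫ t in (0:ℝ)..1,
          (-((k + 1 : ℂ) * ((1 : ℂ) - t) ^ k) * Complex.exp (t * z)
            + ((1 : ℂ) - t) ^ (k + 1) * (z * Complex.exp (t * z))))
        = -((k + 1 : ℂ)) * (∫ t in (0:ℝ)..1, ((1 : ℂ) - t) ^ k * Complex.exp (t * z))
          + z * ∫ t in (0:ℝ)..1, ((1 : ℂ) - t) ^ (k + 1) * Complex.exp (t * z) := by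
      rw [intervalIntegral.integral_add
        (f := fun t : ℝ => -((k + 1 : ℂ) * ((1 : ℂ) - t) ^ k) * Complex.exp (t * z))
        (g := fun t : ℝ => ((1 : ℂ) - t) ^ (k + 1) * (z * Complex.exp (t * z)))
        ((((continuous_const.mul (cpow_cont k)).neg).mul (cexp_cont z)).intervalIntegrable 0 1)
        (((cpow_cont (k + 1)).mul (continuous_const.mul (cexp_cont z))).intervalIntegrable 0 1)]
      rw [← intervalIntegral.integral_const_mul, ← intervalIntegral.integral_const_mul]
      congr 1
      · congr 1; ext t; ring
      · congr 1; ext t; ring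
    rw [hsplit] at ibp
    norm_num at ibp
    -- ibp : -(k+1) * I_k + z * I_{k+1} = -1  (roughly)
    have hk1 : ((k : ℂ) + 1) ≠ 0 := by exact_mod_cast (Nat.cast_add_one_ne_zero (R := ℂ) k)
    have key : (∫ t in (0:ℝ)..1, ((1 : ℂ) - t) ^ k * Complex.exp (t * z))
        = (1 + z * ∫ t in (0:ℝ)..1, ((1 : ℂ) - t) ^ (k + 1) * Complex.exp (t * z)) / (k + 1) := by
      rw [eq_div_iff hk1]
      linear_combination -ibp
    rw [Finset.sum_range_succ, sub_add_eq_sub_sub]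
    rw [ih, key]
    have hfk : ((Nat.factorial k : ℂ)) ≠ 0 := by exact_mod_cast Nat.factorial_ne_zero k
    have hfk1 : ((Nat.factorial (k + 1) : ℂ)) ≠ 0 := by exact_mod_cast Nat.factorial_ne_zero (k+1)
    have hfac : ((Nat.factorial (k + 1) : ℂ)) = ((k : ℂ) + 1) * (Nat.factorial k : ℂ) := by
      push_cast [Nat.factorial_succ]; ring
    generalize (∫ t in (0:ℝ)..1, ((1 : ℂ) - t) ^ (k + 1) * Complex.exp (t * z)) = I
    rw [hfac]
    field_simp
    ring

open Finset in
theorem taylor_trunc_error (k : ℕ) (hk : 0 < k) (z : ℂ)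
    (hz : ‖z‖ ≤ 1) (hre : z.re ≤ 0) :
    ‖(∑ j ∈ Finset.range (k + 1), z ^ j / (Nat.factorial j : ℂ)) - Complex.exp z‖ ≤
      1 / (Nat.factorial (k + 1) : ℝ) := by
  rw [← norm_neg, neg_sub, remainder_formula z k]
  have hIbound : ‖∫ t in (0:ℝ)..1, ((1 : ℂ) - t) ^ k * Complex.exp (t * z)‖
      ≤ |∫ t in (0:ℝ)..1, (1 - t) ^ k| := by
    apply intervalIntegral.norm_integral_le_abs_of_norm_le
    · filter_upwards [ae_restrict_mem measurableSet_Ioc] with t ht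
      rw [Set.uIoc_of_le (by norm_num)] at ht
      obtain ⟨ht0, ht1⟩ := ht
      have h1t : (0:ℝ) ≤ 1 - t := by linarith
      rw [norm_mul, norm_pow]
      have e1 : ‖(1 : ℂ) - (t:ℂ)‖ = 1 - t := by
        rw [← Complex.ofReal_one, ← Complex.ofReal_sub, Complex.norm_real,
          Real.norm_of_nonneg h1t]
      have e2 : ‖Complex.exp ((t:ℂ) * z)‖ ≤ 1 := by
        rw [Complex.norm_exp]
        apply Real.exp_le_one_iff.mpr
        rw [Complex.mul_re]
        simp only [Complex.ofReal_re, Complex.ofReal_im, zero_mul, sub_zero]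
        nlinarith
      calc ‖(1 : ℂ) - (t:ℂ)‖ ^ k * ‖Complex.exp ((t:ℂ) * z)‖
          ≤ ‖(1 : ℂ) - (t:ℂ)‖ ^ k * 1 := by
            exact mul_le_mul_of_nonneg_left e2 (by positivity)
        _ = (1 - t) ^ k := by rw [e1, mul_one]
    · exact ((continuous_const.sub continuous_id).pow k).intervalIntegrable 0 1
  have hI1 : (∫ t in (0:ℝ)..1, (1 - t) ^ k) = 1 / (k + 1 : ℝ) := by
    have := intervalIntegral.integral_comp_sub_left (a := (0:ℝ)) (b := 1)
      (fun x : ℝ => x ^ k) 1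
    simp [integral_pow] at this ⊢
    rw [this]
  rw [hI1] at hIbound
  rw [abs_of_nonneg (by positivity : (0:ℝ) ≤ 1 / (k + 1 : ℝ))] at hIbound
  rw [norm_mul]
  have habs : ‖z ^ (k + 1) / (Nat.factorial k : ℂ)‖ ≤ 1 / (Nat.factorial k : ℝ) := by
    rw [norm_div, norm_pow]
    have h1 : ‖z‖ ^ (k + 1) ≤ 1 := pow_le_one₀ (norm_nonneg z) hz
    have h2 : ‖((Nat.factorial k : ℂ))‖ = (Nat.factorial k : ℝ) := by
      simp
    rw [h2]
    have hfk : (0:ℝ) < (Nat.factorial k : ℝ) := by exact_mod_cast Nat.factorial_pos k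
    gcongr
  have hfk : (0:ℝ) < (Nat.factorial k : ℝ) := by exact_mod_cast Nat.factorial_pos k
  calc ‖z ^ (k + 1) / (Nat.factorial k : ℂ)‖ *
        ‖∫ t in (0:ℝ)..1, ((1 : ℂ) - t) ^ k * Complex.exp (t * z)‖
      ≤ (1 / (Nat.factorial k : ℝ)) * (1 / (k + 1 : ℝ)) := by
        apply mul_le_mul habs hIbound (norm_nonneg _) (by positivity)
    _ = 1 / (Nat.factorial (k + 1) : ℝ) := by
        rw [Nat.factorial_succ]; push_cast; field_simp
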